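/- Let $h$ be supermultiplicative and $f:I\to(0,\infty)$ be $H_tA_h$-convex. Then for all $x_1<x_2<x_3$ in $I$ with $x_1(x_3-x_2)$, $x_3(x_2-x_1)$, $x_2(x_3-x_1)$ in the domain of $h$: $h(x_1(x_3-x_2))f(x_1)+h(x_3(x_2-x_1))f(x_3)\ge h(x_2(x_3-x_1))f(x_2)$. -/

import Mathlib

open Real Set

theorem HtAh_three_point_inequality (I : Set ℝ) (hI : I ⊆ Ioi 0)
    (h : ℝ → ℝ) (hpos : ∀ t > (0:ℝ), 0 < h t)
    (hsuper : ∀ x > (0:ℝ), ∀ y > (0:ℝ), h x * h y ≤ h (x * y))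
    (f : ℝ → ℝ) (hfpos : ∀ x ∈ I, 0 < f x)
    (hconv : ∀ a ∈ I, ∀ b ∈ I, ∀ t ∈ Icc (0:ℝ) 1,
      f (a * b / (t * a + (1 - t) * b)) ≤ h (1 - t) * f a + h t * f b) :
    ∀ x₁ ∈ I, ∀ x₂ ∈ I, ∀ x₃ ∈ I, x₁ < x₂ → x₂ < x₃ →
      h (x₂ * (x₃ - x₁)) * f x₂ ≤
        h (x₁ * (x₃ - x₂)) * f x₁ + h (x₃ * (x₂ - x₁)) * f x₃ := by
  intro x₁ hx₁ x₂ hx₂ x₃ hx₃ h12 h23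
  have p1 : (0:ℝ) < x₁ := hI hx₁
  have p2 : (0:ℝ) < x₂ := hI hx₂
  have p3 : (0:ℝ) < x₃ := hI hx₃
  set D : ℝ := x₂ * (x₃ - x₁) with hD
  have hDpos : 0 < D := by
    have : 0 < x₃ - x₁ := by linarith
    positivity
  set t : ℝ := x₃ * (x₂ - x₁) / D with ht
  have htpos : 0 < t := by
    have h1 : 0 < x₂ - x₁ := by linarith
    positivity
  have h1t : 1 - t = x₁ * (x₃ - x₂) / D := by
    field_simp [ht]
    have htD : t * D = x₃ * (x₂ - x₁) := by
      rw [ht]; exact div_mul_cancel₀ _ hDpos.ne'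
    linear_combination -htD + hD
  have h1tpos : 0 < 1 - t := by
    rw [h1t]
    have : 0 < x₃ - x₂ := by linarith
    positivity
  have htmem : t ∈ Icc (0:ℝ) 1 := ⟨le_of_lt htpos, by linarith⟩
  have hden : t * x₁ + (1 - t) * x₃ = x₁ * x₃ / x₂ := by
    rw [h1t, ht]
    field_simp [hD]
    ring
  have hval : x₁ * x₃ / (t * x₁ + (1 - t) * x₃) = x₂ := by
    rw [hden]
    field_simp
  have key := hconv x₁ hx₁ x₃ hx₃ t htmem
  rw [hval] at key
  have hDt : D * t = x₃ * (x₂ - x₁) := by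
    rw [ht]; field_simp
  have hD1t : D * (1 - t) = x₁ * (x₃ - x₂) := by
    rw [h1t]; field_simp
  have hhD : 0 < h D := hpos D hDpos
  have hme1 : h D * h (1 - t) ≤ h (x₁ * (x₃ - x₂)) := by
    have := hsuper D hDpos (1 - t) h1tpos
    rwa [hD1t] at this
  have hme2 : h D * h t ≤ h (x₃ * (x₂ - x₁)) := by
    have := hsuper D hDpos t htpos
    rwa [hDt] at this
  have hf1 : 0 < f x₁ := hfpos x₁ hx₁
  have hf3 : 0 < f x₃ := hfpos x₃ hx₃
  calc h D * f x₂ ≤ h D * (h (1 - t) * f x₁ + h t * f x₃) := by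
        exact mul_le_mul_of_nonneg_left key hhD.le
    _ = (h D * h (1 - t)) * f x₁ + (h D * h t) * f x₃ := by ring
    _ ≤ h (x₁ * (x₃ - x₂)) * f x₁ + h (x₃ * (x₂ - x₁)) * f x₃ := by
        gcongr
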